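/- The free metric monoid functor is not enriched over Met: let Y = Bool with the extended metric edist b b' = 0 if b = b' and 1 otherwise, and let f₁, f₂ : PUnit → Bool be the constant maps with values true and false respectively. Then ⨆_{x : PUnit} edist (f₁ x) (f₂ x) = 1, but for the induced maps on lists one has ⨆_{l : List PUnit} D (l.map f₁) (l.map f₂) = ∞, where D is the addition metric on lists; indeed D (List.replicate n true) (List.replicate n false) = n for every n. -/

import Mathlib

open scoped ENNReal

/-- The addition metric on lists over an extended metric space: the sum of the pointwise
distances when the lengths agree, and `∞` otherwise. -/
noncomputable def listD {X : Type*} [EMetricSpace X] (l l' : List X) : ℝ≥0∞ :=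
  if h : l.length = l'.length then
    ∑ i : Fin l.length, edist (l.get i) (l'.get (Fin.cast h i))
  else ∞

/-- `Bool` with the discrete `{0,1}`-valued extended metric. -/
noncomputable instance : EMetricSpace Bool where
  edist b b' := if b = b' then 0 else 1
  edist_self b := by simp
  edist_comm a b := by cases a <;> cases b <;> simp
  edist_triangle a b c := by cases a <;> cases b <;> cases c <;> simp
  eq_of_edist_eq_zero := by intro a b h; cases a <;> cases b <;> simp_all

lemma edist_true_false : edist true false = 1 := rfl

lemma listD_rep (n : ℕ) : listD (List.replicate n true) (List.replicate n false) = n := by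
  unfold listD
  rw [dif_pos (by simp)]
  simp [List.getElem_replicate, edist_true_false]

/-- The free metric monoid functor is not enriched over `Met`: the constant maps
`true, false : PUnit → Bool` have distance `1`, but the induced maps on lists with the
addition metric have distance `∞`. -/
theorem free_metric_monoid_not_enriched :
    ((⨆ x : PUnit, edist ((fun _ : PUnit => true) x) ((fun _ : PUnit => false) x)) = 1) ∧
    ((⨆ l : List PUnit,
        listD (l.map fun _ : PUnit => true) (l.map fun _ : PUnit => false)) = ∞) ∧
    ∀ n : ℕ, listD (List.replicate n true) (List.replicate n false) = n := by
  refine ⟨by simp [edist_true_false], ?_, listD_rep⟩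
  rw [eq_top_iff]
  have key : ∀ n : ℕ, (n : ℝ≥0∞) ≤
      ⨆ l : List PUnit, listD (l.map fun _ : PUnit => true) (l.map fun _ : PUnit => false) := by
    intro n
    calc (n : ℝ≥0∞) = listD (((List.replicate n PUnit.unit).map fun _ : PUnit => true))
          (((List.replicate n PUnit.unit).map fun _ : PUnit => false)) := by
            simp [listD_rep]
      _ ≤ _ := le_iSup (fun l : List PUnit => listD (l.map fun _ : PUnit => true) (l.map fun _ : PUnit => false)) (List.replicate n PUnit.unit)
  exact le_of_forall_lt fun c hc => by
    obtain ⟨n, hn⟩ := ENNReal.exists_nat_gt hc.ne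
    exact lt_of_lt_of_le hn (key n)
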